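/- If G is a surjunctive group and k is any field, then for all α, β ∈ R(k,G) with α ⋆ β = X_{1_G}, one also has β ⋆ α = X_{1_G}; that is, the near-ring R(k,G) is directly finite. -/

import Mathlib

open MvPolynomial

/-- A cellular automaton over group `G` and alphabet `A`: a map admitting a
finite memory set `M ⊆ G` and a local defining map `μ : A^M → A` with
`τ(c)(g) = μ((g⁻¹c)|_M)`, where `(gc)(h) = c(g⁻¹h)`. -/
def IsCellularAutomaton (G : Type) [Group G] (A : Type) (τ : (G → A) → (G → A)) : Prop :=
  ∃ (M : Finset G) (μ : (M → A) → A), ∀ (c : G → A) (g : G),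
    τ c g = μ fun m : M => c (g * (m : G))

/-- A group is surjunctive if every injective cellular automaton with finite
alphabet over it is surjective. -/
def Surjunctive (G : Type) [Group G] : Prop :=
  ∀ (A : Type) [Finite A] (τ : (G → A) → (G → A)),
    IsCellularAutomaton G A τ → Function.Injective τ → Function.Surjective τ

/-- The multiplication `⋆` on `R(k,G) = k[X_g : g ∈ G]`. -/
noncomputable def RkGmul {k : Type} [Field k] {G : Type} [Group G]
    (α β : MvPolynomial G k) : MvPolynomial G k :=
  MvPolynomial.aeval (fun g : G => MvPolynomial.rename (fun h : G => g * h) β) α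

section Star

variable {G : Type} [Group G] {S : Type} [CommSemiring S]

/-- The `⋆`-product, generalized to any commutative semiring of coefficients. -/
noncomputable def starMul (α β : MvPolynomial G S) : MvPolynomial G S :=
  aeval (fun g : G => rename (fun h : G => g * h) β) α

/-- The configuration map (cellular automaton) induced by `β`. -/
noncomputable def Tmap (β : MvPolynomial G S) (c : G → S) (g : G) : S :=
  eval (fun h => c (g * h)) β

lemma eval_congr_vars {σ : Type*} (p : MvPolynomial σ S) {c d : σ → S}
    (h : ∀ v ∈ p.vars, c v = d v) : eval c p = eval d p :=
  eval₂Hom_congr' rfl (fun i hi _ => h i hi) rfl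

lemma eval_starMul (α β : MvPolynomial G S) (c : G → S) :
    eval c (starMul α β) = eval (Tmap β c) α := by
  unfold starMul Tmap
  rw [aeval_def, algebraMap_eq, ← coe_eval₂Hom, ← RingHom.comp_apply]
  rw [show ((eval c).comp (eval₂Hom C fun g : G => rename (fun h : G => g * h) β))
      = eval₂Hom (RingHom.id S) (fun g : G => eval (fun h => c (g * h)) β) from ?_]
  · rfl
  · apply MvPolynomial.ringHom_ext <;> intro x <;> simp [eval_rename, Function.comp_def]

lemma Tmap_starMul (α β : MvPolynomial G S) (c : G → S) :
    Tmap (starMul α β) c = Tmap α (Tmap β c) := by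
  funext g
  show eval _ (starMul α β) = _
  rw [eval_starMul]
  have : (Tmap β fun h => c (g * h)) = fun h => Tmap β c (g * h) := by
    funext h
    exact eval_congr_vars β (fun v _ => by rw [mul_assoc])
  rw [this]
  rfl

lemma Tmap_X_one (c : G → S) : Tmap (X (1 : G) : MvPolynomial G S) c = c := by
  funext g
  simp [Tmap]

lemma map_starMul {S' : Type} [CommSemiring S'] (f : S →+* S') (α β : MvPolynomial G S) :
    map f (starMul α β) = starMul (map f α) (map f β) := by
  induction α using MvPolynomial.induction_on with
  | C a => simp [starMul, map_aeval, aeval_C, algebraMap_eq, map_C]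
  | add p q hp hq => simp only [starMul, map_add] at *; rw [hp, hq]
  | mul_X p g hp => simp only [starMul, map_mul, map_X] at *
                    rw [hp]
                    simp [aeval_X, map_rename]

lemma eval_map_of_agree {σ : Type*} {S' : Type} [CommSemiring S'] (f : S →+* S')
    (q : MvPolynomial σ S) {c : σ → S'} {c₀ : σ → S}
    (hc : ∀ v ∈ q.vars, c v = f (c₀ v)) : eval c (map f q) = f (eval c₀ q) := by
  rw [eval_map]
  have : f (eval c₀ q) = eval₂ f (fun v => f (c₀ v)) q := by
    rw [show (eval c₀ q) = eval₂ (RingHom.id S) c₀ q from rfl, eval₂_comp_left]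
    simp [Function.comp_def]
  rw [this, ← coe_eval₂Hom, ← coe_eval₂Hom]
  exact eval₂Hom_congr' rfl (fun i hi _ => hc i hi) rfl

lemma isCA_Tmap (β : MvPolynomial G S) : IsCellularAutomaton G S (Tmap β) := by
  classical
  refine ⟨β.vars, fun x => eval (fun h => if hm : h ∈ β.vars then x ⟨h, hm⟩ else 0) β, ?_⟩
  intro c g
  exact eval_congr_vars β (fun v hv => by simp [hv])

end Star

section FiniteField

variable {G : Type} [Group G]

lemma starMul_finite_field (hG : Surjunctive G) {F : Type} [Field F] [Finite F]
    (α β : MvPolynomial G F) (h : starMul α β = X (1 : G)) :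
    starMul β α = X (1 : G) := by
  classical
  set K := AlgebraicClosure F with hK
  let φ : F →+* K := algebraMap F K
  refine MvPolynomial.map_injective φ φ.injective ?_
  apply MvPolynomial.funext
  intro c
  rw [map_X, eval_X]
  set V : Finset G := insert (1 : G) (starMul β α).vars with hV
  set K₀ := IntermediateField.adjoin F (c '' (V : Set G)) with hK₀
  haveI : Finite ↥(c '' (V : Set G)) := (V.finite_toSet.image c).to_subtype
  haveI : FiniteDimensional F K₀ :=
    IntermediateField.finiteDimensional_adjoin
      (fun x _ => (Algebra.IsIntegral.isIntegral (R := F) x))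
  haveI : Finite K₀ := Module.finite_of_finite F
  let c₀ : G → K₀ := fun g =>
    if hg : g ∈ V then ⟨c g, IntermediateField.subset_adjoin F _ ⟨g, hg, rfl⟩⟩ else 0
  let φ₀ : F →+* K₀ := algebraMap F K₀
  let ψ : K₀ →+* K := algebraMap K₀ K
  have hψφ : ψ.comp φ₀ = φ := (IsScalarTower.algebraMap_eq F K₀ K).symm
  set α₀ := map φ₀ α with hα₀
  set β₀ := map φ₀ β with hβ₀
  have h₀ : starMul α₀ β₀ = X (1 : G) := by
    rw [hα₀, hβ₀, ← map_starMul, h, map_X]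
  have hleft : ∀ d : G → K₀, Tmap α₀ (Tmap β₀ d) = d := by
    intro d
    rw [← Tmap_starMul, h₀, Tmap_X_one]
  have hinj : Function.Injective (Tmap β₀) := Function.LeftInverse.injective hleft
  have hsurj := hG K₀ (Tmap β₀) (isCA_Tmap β₀) hinj
  have hright : ∀ d : G → K₀, Tmap β₀ (Tmap α₀ d) = d := by
    intro d
    obtain ⟨e, he⟩ := hsurj d
    rw [← he, hleft]
  have key : eval c₀ (starMul β₀ α₀) = c₀ 1 := by
    have h1 : Tmap (starMul β₀ α₀) c₀ = c₀ := by rw [Tmap_starMul, hright]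
    have h2 := congrFun h1 1
    rw [show Tmap (starMul β₀ α₀) c₀ 1 = eval c₀ (starMul β₀ α₀) from ?_] at h2
    · exact h2
    · show eval (fun h => c₀ (1 * h)) _ = _
      simp [one_mul]
  have hagree : ∀ v ∈ (starMul β₀ α₀).vars, c v = ψ (c₀ v) := by
    intro v hv
    have hvV : v ∈ V := by
      have h1 : (starMul β₀ α₀).vars ⊆ (starMul β α).vars := by
        rw [hα₀, hβ₀, ← map_starMul]
        exact vars_map _ φ₀
      exact Finset.mem_insert_of_mem (h1 hv)
    simp only [c₀, dif_pos hvV]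
    rfl
  have hmm : map φ (starMul β α) = map ψ (starMul β₀ α₀) := by
    rw [hα₀, hβ₀, ← map_starMul, map_map, hψφ]
  rw [hmm, eval_map_of_agree ψ _ hagree, key]
  have h1V : (1 : G) ∈ V := Finset.mem_insert_self _ _
  simp only [c₀, dif_pos h1V]
  rfl

end FiniteField

lemma int_isJacobsonRing : IsJacobsonRing ℤ := by
  rw [isJacobsonRing_iff_prime_eq]
  intro P hP
  by_cases hbot : P = ⊥
  · subst hbot
    refine le_antisymm ?_ Ideal.le_jacobson
    intro x hx
    by_contra hx0
    have hx0' : x ≠ 0 := by simpa [Ideal.mem_bot] using hx0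
    obtain ⟨q, hqle, hq⟩ := Nat.exists_infinite_primes (x.natAbs + 1)
    have hmax : (Ideal.span {(q : ℤ)}).IsMaximal :=
      PrincipalIdealRing.isMaximal_of_irreducible
        (Int.prime_iff_natAbs_prime.mpr (by simpa using hq)).irreducible
    have hxq : x ∈ Ideal.span {(q : ℤ)} :=
      Ideal.mem_sInf.mp hx (show (⊥ : Ideal ℤ) ≤ Ideal.span {(q : ℤ)} ∧
        (Ideal.span {(q : ℤ)}).IsMaximal from ⟨bot_le, hmax⟩)
    rw [Ideal.mem_span_singleton] at hxq
    have hdvd : q ∣ x.natAbs := by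
      have := Int.natAbs_dvd_natAbs.mpr hxq
      simpa using this
    have := Nat.le_of_dvd (Int.natAbs_pos.mpr hx0') hdvd
    omega
  · haveI : P.IsMaximal := IsPrime.to_maximal_ideal hbot
    exact Ideal.jacobson_eq_self_of_isMaximal

/-- A field which is a finite-type `ℤ`-algebra is finite. -/
lemma finite_of_field_finiteType (F : Type) [Field F]
    (hFT : (algebraMap ℤ F).FiniteType) : Finite F := by
  haveI : IsJacobsonRing ℤ := int_isJacobsonRing
  have hfin : (algebraMap ℤ F).Finite :=
    RingHom.finite_iff_finiteType_of_isJacobsonRing.mpr hFT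
  haveI : Module.Finite ℤ F := by
    have h := hfin
    unfold RingHom.Finite at h
    have e : (algebraMap ℤ F).toAlgebra = (inferInstance : Algebra ℤ F) :=
      Subsingleton.elim _ _
    rwa [e] at h
  haveI : Algebra.IsIntegral ℤ F := Algebra.IsIntegral.of_finite ℤ F
  rcases CharP.char_is_prime_or_zero F (ringChar F) with hp | h0
  · haveI : CharP F (ringChar F) := ringChar.charP F
    apply Module.finite_of_fg_torsion
    intro x
    refine ⟨⟨(ringChar F : ℤ), mem_nonZeroDivisors_of_ne_zero (by exact_mod_cast hp.ne_zero)⟩, ?_⟩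
    show ((ringChar F : ℕ) : ℤ) • x = 0
    rw [zsmul_eq_mul]
    push_cast
    rw [CharP.cast_eq_zero F (ringChar F), zero_mul]
  · haveI : CharP F 0 := h0 ▸ ringChar.charP F
    haveI : CharZero F := CharP.charP_to_charZero F
    exfalso
    have hinj : Function.Injective (algebraMap ℤ F) := by
      have : (algebraMap ℤ F) = Int.castRingHom F := by ext; simp
      rw [this]
      exact Int.cast_injective
    exact Int.not_isField (isField_of_isIntegral_of_isField hinj (Field.toIsField F))

lemma reduction_lemma {G : Type} [Group G] (hG : Surjunctive G) {R : Type} [CommRing R]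
    {F : Type} [Field F] [Finite F] (f : R →+* F)
    (α₀ β₀ : MvPolynomial G R) (h₀ : starMul α₀ β₀ = X (1 : G)) :
    map f (starMul β₀ α₀ - X (1 : G)) = 0 := by
  have hbar : starMul (map f α₀) (map f β₀) = X (1 : G) := by
    rw [← map_starMul, h₀, map_X]
  rw [map_sub, map_starMul, map_X, starMul_finite_field hG _ _ hbar, sub_self]

section Lift

variable {k : Type} [Field k]

/-- Lift a polynomial whose coefficients lie in a subalgebra. -/
noncomputable def liftPoly {σ : Type} (R₀ : Subalgebra ℤ k) (p : MvPolynomial σ k)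
    (hp : ∀ u, MvPolynomial.coeff u p ∈ R₀) : MvPolynomial σ R₀ :=
  ∑ u ∈ p.support, monomial u (⟨MvPolynomial.coeff u p, hp u⟩ : R₀)

set_option maxHeartbeats 1000000 in
set_option synthInstance.maxHeartbeats 400000 in
lemma map_liftPoly {σ : Type} (R₀ : Subalgebra ℤ k) (p : MvPolynomial σ k)
    (hp : ∀ u, MvPolynomial.coeff u p ∈ R₀) :
    map (algebraMap R₀ k) (liftPoly R₀ p hp) = p := by
  unfold liftPoly
  rw [map_sum]
  conv_rhs => rw [p.as_sum]
  refine Finset.sum_congr rfl (fun u hu => ?_)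
  rw [map_monomial]
  rfl

end Lift

/-- For a surjunctive group `G` and any field `k`, the near-ring `R(k,G)` is
directly finite: `α ⋆ β = X_{1_G}` implies `β ⋆ α = X_{1_G}`. -/
theorem RkG_directly_finite {G : Type} [Group G] (hG : Surjunctive G)
    {k : Type} [Field k] (α β : MvPolynomial G k)
    (h : RkGmul α β = MvPolynomial.X (1 : G)) :
    RkGmul β α = MvPolynomial.X (1 : G) := by
  classical
  have h' : starMul α β = X (1 : G) := h
  show starMul β α = X (1 : G)
  -- the finitely generated coefficient subring
  set Sc : Finset k := α.support.image (fun u => MvPolynomial.coeff u α) ∪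
      β.support.image (fun u => MvPolynomial.coeff u β) with hSc
  set A₀ : Subalgebra ℤ k := Algebra.adjoin ℤ (Sc : Set k) with hA₀
  haveI hft : Algebra.FiniteType ℤ A₀ :=
    (Subalgebra.fg_iff_finiteType A₀).mp (Subalgebra.fg_adjoin_finset Sc)
  have hcα : ∀ u, MvPolynomial.coeff u α ∈ A₀ := by
    intro u
    by_cases h0 : MvPolynomial.coeff u α = 0
    · rw [h0]; exact zero_mem _
    · refine Algebra.subset_adjoin ?_
      rw [Finset.mem_coe, hSc]
      exact Finset.mem_union_left _
        (Finset.mem_image.mpr ⟨u, MvPolynomial.mem_support_iff.mpr h0, rfl⟩)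
  have hcβ : ∀ u, MvPolynomial.coeff u β ∈ A₀ := by
    intro u
    by_cases h0 : MvPolynomial.coeff u β = 0
    · rw [h0]; exact zero_mem _
    · refine Algebra.subset_adjoin ?_
      rw [Finset.mem_coe, hSc]
      exact Finset.mem_union_right _
        (Finset.mem_image.mpr ⟨u, MvPolynomial.mem_support_iff.mpr h0, rfl⟩)
  set ι : A₀ →+* k := algebraMap A₀ k with hι
  have hιinj : Function.Injective ι := fun a b hab => Subtype.ext hab
  set α₀ := liftPoly A₀ α hcα with hα₀
  set β₀ := liftPoly A₀ β hcβ with hβ₀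
  have hmapα : map ι α₀ = α := map_liftPoly A₀ α hcα
  have hmapβ : map ι β₀ = β := map_liftPoly A₀ β hcβ
  have h₀ : starMul α₀ β₀ = X (1 : G) := by
    apply MvPolynomial.map_injective ι hιinj
    rw [map_starMul, hmapα, hmapβ, h', map_X]
  haveI : IsJacobsonRing ℤ := int_isJacobsonRing
  haveI : IsJacobsonRing A₀ := isJacobsonRing_of_finiteType (A := ℤ)
  -- it suffices to prove the identity over `A₀`
  suffices hs : starMul β₀ α₀ = X (1 : G) by
    have := congrArg (map ι) hs
    rwa [map_starMul, hmapα, hmapβ, map_X] at this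
  set δ := starMul β₀ α₀ - X (1 : G) with hδ
  have hδ0 : δ = 0 := by
    apply MvPolynomial.ext
    intro u
    rw [MvPolynomial.coeff_zero]
    have hjac : MvPolynomial.coeff u δ ∈ (⊥ : Ideal A₀).jacobson := by
      rw [Ideal.jacobson]
      refine Ideal.mem_sInf.mpr ?_
      rintro J ⟨-, hJmax⟩
      haveI : J.IsMaximal := hJmax
      letI fld : Field (A₀ ⧸ J) := Ideal.Quotient.field J
      haveI fin : Finite (A₀ ⧸ J) := by
        apply finite_of_field_finiteType
        have h1 : (algebraMap ℤ A₀).FiniteType := by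
          have e : (algebraMap ℤ A₀).toAlgebra = (inferInstance : Algebra ℤ A₀) :=
            Subsingleton.elim _ _
          unfold RingHom.FiniteType
          rw [e]
          exact hft
        have h2 : ((Ideal.Quotient.mk J).comp (algebraMap ℤ A₀)).FiniteType :=
          RingHom.FiniteType.comp_surjective h1 Ideal.Quotient.mk_surjective
        have e2 : algebraMap ℤ (A₀ ⧸ J) = (Ideal.Quotient.mk J).comp (algebraMap ℤ A₀) :=
          Subsingleton.elim _ _
        convert h2
        · rfl
        · exact e2
      have hmapδ : map (Ideal.Quotient.mk J) δ = 0 := by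
        rw [hδ]
        exact reduction_lemma hG (Ideal.Quotient.mk J) α₀ β₀ h₀
      have : (Ideal.Quotient.mk J) (MvPolynomial.coeff u δ) = 0 := by
        rw [← MvPolynomial.coeff_map, hmapδ, MvPolynomial.coeff_zero]
      exact Ideal.Quotient.eq_zero_iff_mem.mp this
    have hrad : (⊥ : Ideal A₀).IsRadical :=
      Ideal.radical_eq_iff.mp Ideal.radical_bot_of_noZeroDivisors
    have hj := (inferInstance : IsJacobsonRing A₀).out hrad
    rw [hj] at hjac
    simpa [Ideal.mem_bot] using hjac
  have := sub_eq_zero.mp hδ0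
  exact this
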